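/- arXiv:1606.05100 — 2 statements merged into one kernel-verified Lean document; each statement's English description precedes it below -/
import Mathlib

section
/- Let Σ = A C Aᵀ + Γ with A the assignment matrix of a partition G with minimal group size m ≥ 1, C symmetric PSD with Δ(C) > 0, and Γ diagonal constant within groups. Then B* = argmax_{B ∈ 𝒞} ⟨Σ − Γ, B⟩, and the maximizer is unique. -/
open Finset
open scoped Matrix

/-- The normalized partnership matrix of the partition given by assignment `g`. -/
noncomputable def Bstar (p K : ℕ) (g : Fin p → Fin K) : Matrix (Fin p) (Fin p) ℝ :=
  fun a b => if g a = g b then ((Finset.univ.filter (fun c => g c = g a)).card : ℝ)⁻¹ else 0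

/-- The convex set 𝒞. -/
def memC (p K : ℕ) (B : Matrix (Fin p) (Fin p) ℝ) : Prop :=
  B.PosSemidef ∧ (∀ a b, 0 ≤ B a b) ∧ (∀ a, ∑ b, B a b = 1) ∧ B.trace = (K : ℝ)

section Aux

variable {p K : ℕ} (g : Fin p → Fin K)

/-- Size of fiber `j` as a real number. -/
private noncomputable def nn (j : Fin K) : ℝ :=
  ((Finset.univ.filter fun c => g c = j).card : ℝ)

private lemma nn_nonneg (j : Fin K) : 0 ≤ nn g j := Nat.cast_nonneg _

private lemma nn_pos (hg : Function.Surjective g) (j : Fin K) : 0 < nn g j := by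
  obtain ⟨a, ha⟩ := hg j
  have : (Finset.univ.filter fun c => g c = j).Nonempty := ⟨a, by simp [ha]⟩
  unfold nn
  exact_mod_cast Finset.card_pos.mpr this

private lemma Bstar_apply (a b : Fin p) :
    Bstar p K g a b = if g a = g b then (nn g (g a))⁻¹ else 0 := rfl

private lemma Bstar_symm (a b : Fin p) : Bstar p K g a b = Bstar p K g b a := by
  rw [Bstar_apply, Bstar_apply]
  by_cases h : g a = g b
  · rw [if_pos h, if_pos h.symm, h]
  · rw [if_neg h, if_neg (fun h' => h h'.symm)]

private lemma Bstar_rowsum (hg : Function.Surjective g) (a : Fin p) :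
    ∑ b, Bstar p K g a b = 1 := by
  have : ∑ b, Bstar p K g a b
      = ∑ b ∈ Finset.univ.filter (fun c => g c = g a), (nn g (g a))⁻¹ := by
    rw [Finset.sum_filter]
    refine Finset.sum_congr rfl fun b _ => ?_
    rw [Bstar_apply]
    by_cases h : g a = g b
    · rw [if_pos h, if_pos h.symm]
    · rw [if_neg h, if_neg (fun h' => h h'.symm)]
  rw [this, Finset.sum_const, nsmul_eq_mul]
  exact mul_inv_cancel₀ (ne_of_gt (nn_pos g hg (g a)))

private lemma Bstar_trace (hg : Function.Surjective g) :
    (Bstar p K g).trace = (K : ℝ) := by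
  have h1 : (Bstar p K g).trace = ∑ a, (nn g (g a))⁻¹ := by
    refine Finset.sum_congr rfl fun a _ => ?_
    simp [Matrix.diag, Bstar_apply]
  rw [h1, ← Finset.sum_fiberwise Finset.univ g (fun a => (nn g (g a))⁻¹)]
  have h2 : ∀ j : Fin K, ∑ a ∈ Finset.univ.filter (fun c => g c = j), (nn g (g a))⁻¹ = 1 := by
    intro j
    have : ∑ a ∈ Finset.univ.filter (fun c => g c = j), (nn g (g a))⁻¹
        = ∑ _a ∈ Finset.univ.filter (fun c => g c = j), (nn g j)⁻¹ :=
      Finset.sum_congr rfl fun a ha => by rw [(Finset.mem_filter.mp ha).2]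
    rw [this, Finset.sum_const, nsmul_eq_mul]
    exact mul_inv_cancel₀ (ne_of_gt (nn_pos g hg j))
  rw [Finset.sum_congr rfl fun j _ => h2 j]
  simp

private lemma Bstar_posSemidef (hg : Function.Surjective g) :
    (Bstar p K g).PosSemidef := by
  set A : Matrix (Fin K) (Fin p) ℝ := Matrix.of fun j a => if g a = j then 1 else 0 with hA
  have hD : (Matrix.diagonal fun j => (nn g j)⁻¹).PosSemidef :=
    Matrix.PosSemidef.diagonal fun j => inv_nonneg.mpr (nn_nonneg g j)
  have key : Aᴴ * (Matrix.diagonal fun j => (nn g j)⁻¹) * A = Bstar p K g := by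
    ext a b
    rw [Matrix.mul_apply]
    have h1 : ∀ j, (Aᴴ * (Matrix.diagonal fun j => (nn g j)⁻¹)) a j * A j b
        = if g a = j then (if g b = j then (nn g j)⁻¹ else 0) else 0 := by
      intro j
      rw [Matrix.mul_apply]
      simp only [Matrix.conjTranspose_apply, Matrix.diagonal_apply, hA, Matrix.of_apply,
        star_trivial]
      rw [Finset.sum_eq_single j]
      · by_cases h1 : g a = j <;> by_cases h2 : g b = j <;> simp [h1, h2]
      · intro c _ hc; simp [hc]
      · simp
    rw [Finset.sum_congr rfl fun j _ => h1 j, Finset.sum_ite_eq Finset.univ (g a)]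
    simp only [Finset.mem_univ, if_true]
    rw [Bstar_apply]
    by_cases h : g a = g b
    · rw [if_pos h.symm, if_pos h]
    · rw [if_neg (fun h' => h h'.symm), if_neg h]
  rw [← key]
  exact hD.conjTranspose_mul_mul_same A

private lemma Bstar_mul_self (hg : Function.Surjective g) :
    Bstar p K g * Bstar p K g = Bstar p K g := by
  ext a b
  rw [Matrix.mul_apply, Bstar_apply]
  by_cases hab : g a = g b
  · rw [if_pos hab]
    have h1 : ∀ c, Bstar p K g a c * Bstar p K g c b
        = if g c = g a then (nn g (g a))⁻¹ * (nn g (g a))⁻¹ else 0 := by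
      intro c
      rw [Bstar_apply, Bstar_apply]
      by_cases h : g c = g a
      · rw [if_pos h.symm, if_pos (h.trans hab), if_pos h, h]
      · rw [if_neg h, if_neg (fun h' => h h'.symm), zero_mul]
    rw [Finset.sum_congr rfl fun c _ => h1 c, ← Finset.sum_filter, Finset.sum_const,
      nsmul_eq_mul]
    show nn g (g a) * _ = _
    rw [← mul_assoc, mul_inv_cancel₀ (ne_of_gt (nn_pos g hg (g a))), one_mul]
  · rw [if_neg hab]
    refine Finset.sum_eq_zero fun c _ => ?_
    rw [Bstar_apply, Bstar_apply]
    by_cases h : g a = g c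
    · rw [if_neg (fun h' : g c = g b => hab (h.trans h')), mul_zero]
    · rw [if_neg h, zero_mul]

private lemma Bstar_transpose (hg : Function.Surjective g) :
    (Bstar p K g)ᵀ = Bstar p K g := by
  ext a b; exact Bstar_symm g b a

/-- A block-diagonal member of 𝒞 must equal `Bstar`. -/
private lemma block_eq (hg : Function.Surjective g) (B : Matrix (Fin p) (Fin p) ℝ)
    (hB : memC p K B) (h0 : ∀ a b, g a ≠ g b → B a b = 0) : B = Bstar p K g := by
  obtain ⟨hPSD, hnonneg, hrow, htr⟩ := hB
  set P := Bstar p K g with hPdef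
  have hBsymm : ∀ a b, B a b = B b a := by
    intro a b
    have := congrFun (congrFun hPSD.1 a) b
    simpa [Matrix.conjTranspose_apply] using this.symm
  have hBt : Bᵀ = B := by ext a b; exact hBsymm b a
  have hPt : Pᵀ = P := Bstar_transpose g hg
  -- B * P = P
  have hBP : B * P = P := by
    ext a b
    rw [Matrix.mul_apply]
    have h1 : ∀ c, B a c * P c b = if g c = g b then B a c * (nn g (g b))⁻¹ else 0 := by
      intro c
      rw [hPdef, Bstar_apply]
      by_cases h : g c = g b
      · rw [if_pos h, if_pos h, h]
      · rw [if_neg h, if_neg h, mul_zero]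
    rw [Finset.sum_congr rfl fun c _ => h1 c, ← Finset.sum_filter, ← Finset.sum_mul]
    by_cases hab : g a = g b
    · have hsum : ∑ c ∈ Finset.univ.filter (fun c => g c = g b), B a c = ∑ c, B a c := by
        refine Finset.sum_filter_of_ne fun c _ hc => ?_
        by_contra h
        exact hc (h0 a c fun he => h (he.symm.trans hab))
      rw [hsum, hrow a, one_mul, hPdef, Bstar_apply, if_pos hab, hab]
    · have hsum : ∑ c ∈ Finset.univ.filter (fun c => g c = g b), B a c = 0 := by
        refine Finset.sum_eq_zero fun c hc => ?_
        exact h0 a c (fun h => hab (h.trans (Finset.mem_filter.mp hc).2))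
      rw [hsum, zero_mul, hPdef, Bstar_apply, if_neg hab]
  -- the quadratic form of B - P is nonnegative
  have hQform : ∀ x : Fin p → ℝ, x ⬝ᵥ ((B - P) *ᵥ x) = (x - P *ᵥ x) ⬝ᵥ (B *ᵥ (x - P *ᵥ x)) := by
    intro x
    set y := P *ᵥ x with hy
    have hBy : B *ᵥ y = y := by
      rw [hy, Matrix.mulVec_mulVec, hBP]
    have hPy : P *ᵥ y = y := by
      rw [hy, Matrix.mulVec_mulVec, Bstar_mul_self g hg]
    have hyx : y ⬝ᵥ x = y ⬝ᵥ y := by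
      have h' : y ⬝ᵥ (P *ᵥ x) = (Pᵀ *ᵥ y) ⬝ᵥ x := by
        rw [Matrix.dotProduct_mulVec, ← Matrix.mulVec_transpose]
      rw [← hy, hPt, hPy] at h'
      exact h'.symm
    have hyBx : y ⬝ᵥ (B *ᵥ x) = y ⬝ᵥ x := by
      rw [Matrix.dotProduct_mulVec, ← Matrix.mulVec_transpose, hBt, hBy]
    have hrhs : (x - y) ⬝ᵥ (B *ᵥ (x - y)) = x ⬝ᵥ (B *ᵥ x) - y ⬝ᵥ y := by
      rw [Matrix.mulVec_sub, hBy, sub_dotProduct, dotProduct_sub,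
        dotProduct_sub, hyBx, hyx, dotProduct_comm x y, hyx]
      ring
    have hlhs : x ⬝ᵥ ((B - P) *ᵥ x) = x ⬝ᵥ (B *ᵥ x) - y ⬝ᵥ y := by
      rw [Matrix.sub_mulVec, dotProduct_sub, ← hy, dotProduct_comm x y, hyx]
    rw [hlhs, hrhs]
  have hQ : (B - P).PosSemidef := by
    refine Matrix.PosSemidef.of_dotProduct_mulVec_nonneg ?_ ?_
    · exact hPSD.1.sub (Bstar_posSemidef g hg).1
    · intro x
      have h1 := hPSD.dotProduct_mulVec_nonneg (x - P *ᵥ x)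
      have h2 : star (x - P *ᵥ x) = x - P *ᵥ x := by simp
      rw [h2] at h1
      have h3 : star x = x := by simp
      rw [h3, hQform x]
      exact h1
  -- trace of B - P is zero
  have htrQ : (B - P).trace = 0 := by
    rw [Matrix.trace_sub, htr, hPdef, Bstar_trace g hg, sub_self]
  -- hence diagonal of B - P is zero
  have hform : ∀ x : Fin p → ℝ, 0 ≤ x ⬝ᵥ ((B - P) *ᵥ x) := by
    intro x
    have h1 := hQ.dotProduct_mulVec_nonneg x
    have h2 : star x = x := by simp
    rwa [h2] at h1
  have hdiagnn : ∀ a, 0 ≤ (B - P) a a := by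
    intro a
    have := hform (Pi.single a 1)
    rwa [Matrix.mulVec_single, single_dotProduct, one_mul, Pi.smul_apply, op_smul_eq_mul,
      Matrix.col_apply, mul_one] at this
  have hdiag : ∀ a, (B - P) a a = 0 := by
    have := (Finset.sum_eq_zero_iff_of_nonneg (fun a _ => hdiagnn a)).mp htrQ
    exact fun a => this a (Finset.mem_univ a)
  -- PSD with zero diagonal implies zero matrix
  have hzero : ∀ a b, (B - P) a b = 0 := by
    intro a b
    by_cases hab : a = b
    · rw [hab]; exact hdiag b
    · set Q := B - P with hQdef
      have hQsymm : Q b a = Q a b := by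
        have := congrFun (congrFun hQ.1 a) b
        simpa [Matrix.conjTranspose_apply] using this
      set t : ℝ := -(Q a b) with ht
      have := hform (Pi.single a 1 + Pi.single b t)
      rw [Matrix.mulVec_add, Matrix.mulVec_single, Matrix.mulVec_single,
        add_dotProduct, single_dotProduct, single_dotProduct] at this
      simp only [Pi.add_apply, Pi.smul_apply, op_smul_eq_mul, Matrix.col_apply, mul_one] at this
      rw [hdiag a, hdiag b, hQsymm, ht] at this
      have hle : Q a b * Q a b ≤ 0 := by nlinarith [this]
      exact mul_self_eq_zero.mp (le_antisymm hle (mul_self_nonneg _))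
  ext a b
  have := hzero a b
  simpa [sub_eq_zero] using this

end Aux

/-- if Σ = A C Aᵀ + Γ with C PSD, Δ(C) > 0, and Γ diagonal constant
within groups, then B* is the unique maximizer of B ↦ ⟨Σ − Γ, B⟩ over 𝒞. -/
theorem stmt_7 (p K : ℕ) (g : Fin p → Fin K) (hg : Function.Surjective g)
    (C : Matrix (Fin K) (Fin K) ℝ) (hC : C.PosSemidef)
    (γ : Fin K → ℝ)
    (S : Matrix (Fin p) (Fin p) ℝ)
    (hS : ∀ a b, S a b = C (g a) (g b) + (Matrix.diagonal (fun c => γ (g c))) a b)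
    (hΔ : ∀ j k : Fin K, j ≠ k → 0 < C j j + C k k - 2 * C j k) :
    memC p K (Bstar p K g) ∧
    ∀ B : Matrix (Fin p) (Fin p) ℝ, memC p K B → B ≠ Bstar p K g →
      ∑ a, ∑ b, (S a b - (Matrix.diagonal (fun c => γ (g c))) a b) * B a b
        < ∑ a, ∑ b, (S a b - (Matrix.diagonal (fun c => γ (g c))) a b)
            * Bstar p K g a b := by
  have hSd : ∀ a b, S a b - (Matrix.diagonal fun c => γ (g c)) a b = C (g a) (g b) := by
    intro a b; rw [hS]; ring
  have hPmem : memC p K (Bstar p K g) := by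
    refine ⟨Bstar_posSemidef g hg, fun a b => ?_, Bstar_rowsum g hg, Bstar_trace g hg⟩
    rw [Bstar_apply]
    by_cases h : g a = g b
    · rw [if_pos h]; exact inv_nonneg.mpr (nn_nonneg g (g a))
    · rw [if_neg h]
  refine ⟨hPmem, fun B hB hne => ?_⟩
  -- rewrite both objectives via hSd
  have hrw : ∀ M : Matrix (Fin p) (Fin p) ℝ,
      ∑ a, ∑ b, (S a b - (Matrix.diagonal fun c => γ (g c)) a b) * M a b
      = ∑ a, ∑ b, C (g a) (g b) * M a b := by
    intro M
    exact Finset.sum_congr rfl fun a _ => Finset.sum_congr rfl fun b _ => by rw [hSd]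
  rw [hrw B, hrw (Bstar p K g)]
  -- objective formula for any symmetric row-stochastic matrix
  have obj_formula : ∀ M : Matrix (Fin p) (Fin p) ℝ, (∀ a b, M a b = M b a) →
      (∀ a, ∑ b, M a b = 1) →
      ∑ a, ∑ b, C (g a) (g b) * M a b
        = (∑ a, C (g a) (g a))
          - (∑ a, ∑ b, (C (g a) (g a) + C (g b) (g b) - 2 * C (g a) (g b)) * M a b) / 2 := by
    intro M hsym hrow
    have hcol : ∀ b, ∑ a, M a b = 1 := fun b => by
      rw [Finset.sum_congr rfl fun a _ => hsym a b]; exact hrow b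
    have e1 : ∑ a, ∑ b, C (g a) (g a) * M a b = ∑ a, C (g a) (g a) := by
      refine Finset.sum_congr rfl fun a _ => ?_
      rw [← Finset.mul_sum, hrow a, mul_one]
    have e2 : ∑ a, ∑ b, C (g b) (g b) * M a b = ∑ b, C (g b) (g b) := by
      rw [Finset.sum_comm]
      refine Finset.sum_congr rfl fun b _ => ?_
      rw [← Finset.mul_sum, hcol b, mul_one]
    have hterm : ∀ a b : Fin p, (C (g a) (g a) + C (g b) (g b) - 2 * C (g a) (g b)) * M a b
        = C (g a) (g a) * M a b + C (g b) (g b) * M a b - 2 * (C (g a) (g b) * M a b) :=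
      fun a b => by ring
    have h2 : ∑ a, ∑ b, (C (g a) (g a) + C (g b) (g b) - 2 * C (g a) (g b)) * M a b
        = (∑ a, ∑ b, C (g a) (g a) * M a b) + (∑ a, ∑ b, C (g b) (g b) * M a b)
          - 2 * ∑ a, ∑ b, C (g a) (g b) * M a b := by
      simp only [hterm, Finset.sum_sub_distrib, Finset.sum_add_distrib, ← Finset.mul_sum]
    rw [e1, e2] at h2
    linarith
  obtain ⟨hPSD, hnonneg, hrow, htr⟩ := hB
  have hBsymm : ∀ a b, B a b = B b a := by
    intro a b
    have := congrFun (congrFun hPSD.1 a) b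
    simpa [Matrix.conjTranspose_apply] using this.symm
  rw [obj_formula B hBsymm hrow,
    obj_formula (Bstar p K g) (fun a b => Bstar_symm g a b) (Bstar_rowsum g hg)]
  -- the penalty term vanishes at Bstar
  have hP0 : ∑ a, ∑ b, (C (g a) (g a) + C (g b) (g b) - 2 * C (g a) (g b))
      * Bstar p K g a b = 0 := by
    refine Finset.sum_eq_zero fun a _ => Finset.sum_eq_zero fun b _ => ?_
    by_cases h : g a = g b
    · rw [h]; ring
    · rw [Bstar_apply, if_neg h, mul_zero]
  rw [hP0]
  -- the penalty term is positive at B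
  have hterm : ∀ a b, 0 ≤ (C (g a) (g a) + C (g b) (g b) - 2 * C (g a) (g b)) * B a b := by
    intro a b
    by_cases h : g a = g b
    · rw [h, show C (g b) (g b) + C (g b) (g b) - 2 * C (g b) (g b) = 0 by ring, zero_mul]
    · exact mul_nonneg (hΔ _ _ h).le (hnonneg a b)
  have hwit : ∃ a b, g a ≠ g b ∧ B a b ≠ 0 := by
    by_contra h
    push_neg at h
    exact hne (block_eq g hg B ⟨hPSD, hnonneg, hrow, htr⟩
      (fun a b hab => h a b hab))
  obtain ⟨a₀, b₀, hab₀, hB₀⟩ := hwit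
  have hpos : 0 < ∑ a, ∑ b, (C (g a) (g a) + C (g b) (g b) - 2 * C (g a) (g b)) * B a b := by
    refine Finset.sum_pos' (fun a _ => Finset.sum_nonneg fun b _ => hterm a b)
      ⟨a₀, Finset.mem_univ a₀, ?_⟩
    refine Finset.sum_pos' (fun b _ => hterm a₀ b) ⟨b₀, Finset.mem_univ b₀, ?_⟩
    exact mul_pos (hΔ _ _ hab₀) (lt_of_le_of_ne (hnonneg a₀ b₀) (Ne.symm hB₀))
  linarith
end

section
/- Let B ∈ R^{p×p} be symmetric positive semidefinite with nonnegative entries, rows summing to 1, and trace K, and suppose its support is contained in the support of the partnership matrix B* of a partition G into K groups. Then for every k, the block B_{G_kG_k} has exactly one nonzero eigenvalue equal to 1 with eigenvector the all-ones vector, hence B_{G_kG_k} = 11ᵀ/|G_k| and B = B*. -/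
open Finset
open scoped Matrix

/-- A PSD real matrix with zero trace is zero. -/
lemma psd_trace_zero {n : ℕ} (Q : Matrix (Fin n) (Fin n) ℝ) (hQ : Q.PosSemidef)
    (htr : Q.trace = 0) : Q = 0 := by
  have hdiag : ∀ a, Q a a = 0 := by
    have hnn : ∀ a, 0 ≤ Q a a := by
      intro a
      have := hQ.dotProduct_mulVec_nonneg (Pi.single a 1)
      simpa [Matrix.mulVec_single, single_dotProduct] using this
    intro a
    have hsum : ∑ a, Q a a = 0 := htr
    exact le_antisymm (by
      have := Finset.sum_le_sum (fun b _ => hnn b) (s := Finset.univ \ {a})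
      have h := Finset.sum_eq_sum_sdiff_singleton_add (Finset.mem_univ a) (fun b => Q b b)
      nlinarith [Finset.sum_nonneg (fun b (_ : b ∈ Finset.univ \ {a}) => hnn b)]) (hnn a)
  ext a b
  by_cases hab : a = b
  · simp [hab, hdiag]
  have h1 := hQ.dotProduct_mulVec_nonneg (Pi.single a 1 + Pi.single b 1)
  have h2 := hQ.dotProduct_mulVec_nonneg (Pi.single a 1 - Pi.single b 1)
  have hsym := hQ.1
  have hQba : Q b a = Q a b := by
    have := congrFun (congrFun hsym a) b
    simpa [Matrix.conjTranspose_apply] using this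
  simp only [Matrix.mulVec_add, Matrix.mulVec_sub, Matrix.mulVec_single,
    star_trivial, dotProduct_add, dotProduct_sub, add_dotProduct, sub_dotProduct,
    single_dotProduct, Pi.add_apply, Pi.sub_apply, mul_one, one_mul, Pi.smul_apply, MulOpposite.op_one,
    one_smul, Matrix.col_apply] at h1 h2
  rw [hdiag, hdiag] at h1 h2
  show Q a b = 0
  linarith

lemma mul_Bstar {p K : ℕ} (g : Fin p → Fin K) (M : Matrix (Fin p) (Fin p) ℝ)
    (hs : ∀ a b, g a ≠ g b → M a b = 0)
    (hr : ∀ a, ∑ b ∈ Finset.univ.filter (fun c => g c = g a), M a b = 1) :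
    M * Bstar p K g = Bstar p K g := by
  classical
  ext a b
  rw [Matrix.mul_apply]
  have hterm : ∀ c, M a c * Bstar p K g c b =
      if g c = g b then M a c * ((Finset.univ.filter (fun d => g d = g b)).card : ℝ)⁻¹ else 0 := by
    intro c
    unfold Bstar
    split_ifs with hc
    · rw [hc]
    · exact mul_zero _
  rw [Finset.sum_congr rfl (fun c _ => hterm c), ← Finset.sum_filter, ← Finset.sum_mul]
  by_cases h : g a = g b
  · have hset : Finset.univ.filter (fun c => g c = g b) = Finset.univ.filter (fun c => g c = g a) := by rw [h]
    rw [hset, hr a, one_mul]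
    unfold Bstar
    rw [if_pos h, h]
  · have hz : ∀ c ∈ Finset.univ.filter (fun c => g c = g b), M a c = 0 := by
      intro c hc
      simp only [Finset.mem_filter] at hc
      exact hs a c (by rw [hc.2]; exact h)
    rw [Finset.sum_eq_zero hz, zero_mul]
    unfold Bstar
    rw [if_neg h]

/-- a symmetric PSD matrix with nonnegative entries, rows summing to 1,
trace K and support contained in supp(B*) has each diagonal block equal to 11ᵀ/|G_k|,
hence equals B*. -/
theorem stmt_19 (p K : ℕ) (g : Fin p → Fin K) (hg : Function.Surjective g)
    (B : Matrix (Fin p) (Fin p) ℝ)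
    (hPSD : B.PosSemidef) (hpos : ∀ a b, 0 ≤ B a b)
    (hrow : ∀ a, ∑ b, B a b = 1) (htr : B.trace = (K : ℝ))
    (hsupp : ∀ a b, g a ≠ g b → B a b = 0) :
    (∀ a b, g a = g b →
        B a b = ((Finset.univ.filter (fun c => g c = g a)).card : ℝ)⁻¹) ∧
    B = Bstar p K g := by
  classical
  set Bs := Bstar p K g with hBsdef
  -- cardinalities are positive
  have hcard : ∀ k : Fin K, 0 < (Finset.univ.filter (fun c => g c = k)).card := by
    intro k
    obtain ⟨a, ha⟩ := hg k
    exact Finset.card_pos.mpr ⟨a, by simp [ha]⟩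
  -- row sums of B within a group
  have hrowB : ∀ a, ∑ b ∈ Finset.univ.filter (fun c => g c = g a), B a b = 1 := by
    intro a
    rw [← hrow a]
    apply Finset.sum_subset (Finset.subset_univ _)
    intro b _ hb
    simp only [Finset.mem_filter, Finset.mem_univ, true_and] at hb
    exact hsupp a b (fun h => hb h.symm)
  -- Bstar properties
  have hBssupp : ∀ a b, g a ≠ g b → Bs a b = 0 := by
    intro a b h
    simp [hBsdef, Bstar, h]
  have hrowBs : ∀ a, ∑ b ∈ Finset.univ.filter (fun c => g c = g a), Bs a b = 1 := by
    intro a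
    have : ∀ b ∈ Finset.univ.filter (fun c => g c = g a), Bs a b
        = ((Finset.univ.filter (fun c => g c = g a)).card : ℝ)⁻¹ := by
      intro b hb
      simp only [Finset.mem_filter, Finset.mem_univ, true_and] at hb
      simp [hBsdef, Bstar, hb.symm]
    rw [Finset.sum_congr rfl this, Finset.sum_const, nsmul_eq_mul]
    have := hcard (g a)
    field_simp
  have hBBs : B * Bs = Bs := mul_Bstar g B hsupp hrowB
  have hBsBs : Bs * Bs = Bs := mul_Bstar g Bs hBssupp hrowBs
  -- symmetry
  have hBsH : Bsᴴ = Bs := by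
    ext a b
    simp only [Matrix.conjTranspose_apply, star_trivial, hBsdef, Bstar]
    by_cases h : g a = g b
    · rw [if_pos h, if_pos h.symm, h]
    · rw [if_neg h, if_neg (fun h' => h h'.symm)]
  have hBH : Bᴴ = B := hPSD.1
  have hBsB : Bs * B = Bs := by
    have := congrArg Matrix.conjTranspose hBBs
    rwa [Matrix.conjTranspose_mul, hBsH, hBH] at this
  -- Q = B - Bs is PSD
  have hfact : ((1 : Matrix (Fin p) (Fin p) ℝ) - Bs)ᴴ * B * (1 - Bs) = B - Bs := by
    rw [Matrix.conjTranspose_sub, Matrix.conjTranspose_one, hBsH,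
      Matrix.sub_mul, Matrix.one_mul, hBsB, Matrix.mul_sub, Matrix.mul_one,
      Matrix.sub_mul, hBBs, hBsBs]
    abel
  have hQpsd : (B - Bs).PosSemidef := by
    rw [← hfact]
    exact hPSD.conjTranspose_mul_mul_same _
  -- traces
  have htrBs : Bs.trace = (K : ℝ) := by
    have hdiag : ∀ a : Fin p, Bs a a = ((Finset.univ.filter (fun c => g c = g a)).card : ℝ)⁻¹ := by
      intro a; simp [hBsdef, Bstar]
    have h1 : Bs.trace = ∑ a : Fin p, ((Finset.univ.filter (fun c => g c = g a)).card : ℝ)⁻¹ := by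
      unfold Matrix.trace
      exact Finset.sum_congr rfl (fun a _ => hdiag a)
    rw [h1, ← Finset.sum_fiberwise' Finset.univ g
      (fun k => ((Finset.univ.filter (fun c => g c = k)).card : ℝ)⁻¹)]
    have : ∀ k : Fin K, ∑ _i ∈ Finset.univ.filter (fun c => g c = k),
        ((Finset.univ.filter (fun c => g c = k)).card : ℝ)⁻¹ = 1 := by
      intro k
      rw [Finset.sum_const, nsmul_eq_mul]
      have := hcard k
      field_simp
    rw [Finset.sum_congr rfl (fun k _ => this k)]
    simp
  have htrQ : (B - Bs).trace = 0 := by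
    rw [Matrix.trace_sub, htr, htrBs, sub_self]
  have hQ0 : B - Bs = 0 := psd_trace_zero _ hQpsd htrQ
  have hBeq : B = Bs := by
    have := sub_eq_zero.mp hQ0
    exact this
  refine ⟨?_, hBeq⟩
  intro a b hab
  rw [hBeq, hBsdef]
  unfold Bstar
  rw [if_pos hab]
end
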